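/- If three agents all with the same destination x > 0 must be allocated to two taxis of capacities 1 and 2, then no feasible allocation is envy-free: the agent riding alone envies each of the two agents sharing the other taxi. -/

import Mathlib

open Finset MeasureTheory ENNReal

/-- Number of agents in coalition `T` whose destination is at least `r`. -/
noncomputable def nT (xd : ℕ → ℝ) (T : Finset ℕ) (r : ℝ) : ℕ := (T.filter fun a => r ≤ xd a).card

/-- Shapley cost share of a passenger dropping at `y` in coalition `T`
(`∞` when `n_T` vanishes on part of `(0,y]`). -/
noncomputable def phi (xd : ℕ → ℝ) (T : Finset ℕ) (y : ℝ) : ℝ≥0∞ :=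
  ∫⁻ r in Set.Ioc (0:ℝ) y, (nT xd T r : ℝ≥0∞)⁻¹

/-- Cost share including the capacity constraint of the taxi. -/
noncomputable def taxiCost (xd : ℕ → ℝ) (q : ℕ) (T : Finset ℕ) (y : ℝ) : ℝ≥0∞ :=
  if T.card ≤ q then phi xd T y else ⊤

lemma phi_const (xd : ℕ → ℝ) (T : Finset ℕ) (x : ℝ) (n : ℕ)
    (h : ∀ r ∈ Set.Ioc (0:ℝ) x, nT xd T r = n) :
    phi xd T x = (n : ℝ≥0∞)⁻¹ * ENNReal.ofReal x := by
  unfold phi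
  rw [setLIntegral_congr_fun measurableSet_Ioc
      (fun r hr => by rw [h r hr]), setLIntegral_const,
      Real.volume_Ioc, sub_zero]

/-- three agents with the same destination `x > 0` in two taxis of
capacities 2 and 1: in every feasible allocation the agent riding alone envies each of
the two agents sharing the other taxi, so no feasible allocation is envy-free. -/
theorem stmt8 (x : ℝ) (hx : 0 < x) (xd : ℕ → ℝ)
    (hxd : ∀ a ∈ ({0, 1, 2} : Finset ℕ), xd a = x)
    (T1 T2 : Finset ℕ) (hdisj : Disjoint T1 T2)
    (hunion : T1 ∪ T2 = ({0, 1, 2} : Finset ℕ))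
    (hc1 : T1.card ≤ 2) (hc2 : T2.card ≤ 1) :
    ∀ a ∈ T2, ∀ b ∈ T1,
      taxiCost xd 2 (T1.erase b ∪ {a}) (xd a) < taxiCost xd 1 T2 (xd a) := by
  intro a ha b hb
  have hsub1 : T1 ⊆ ({0,1,2} : Finset ℕ) := hunion ▸ subset_union_left
  have hsub2 : T2 ⊆ ({0,1,2} : Finset ℕ) := hunion ▸ subset_union_right
  have hcard : T1.card + T2.card = 3 := by
    rw [← card_union_of_disjoint hdisj, hunion]; decide
  have hc2' : T2.card = 1 := by
    have : 1 ≤ T2.card := card_pos.mpr ⟨a, ha⟩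
    omega
  have hc1' : T1.card = 2 := by omega
  have hT2 : T2 = {a} := by
    apply Finset.eq_singleton_iff_unique_mem.mpr
    refine ⟨ha, fun y hy => ?_⟩
    by_contra hne
    have : 2 ≤ T2.card := Finset.one_lt_card.mpr ⟨y, hy, a, ha, hne⟩
    omega
  have hxa : xd a = x := hxd a (hsub2 ha)
  have haT1 : a ∉ T1 := fun h => (Finset.disjoint_left.mp hdisj h) ha
  set S := T1.erase b ∪ {a} with hS
  have hcardS : S.card = 2 := by
    rw [hS, card_union_of_disjoint, card_erase_of_mem hb, hc1', card_singleton]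
    simp [Finset.disjoint_singleton_right, haT1, Finset.mem_erase]
  have hSsub : S ⊆ ({0,1,2} : Finset ℕ) := by
    intro c hc
    rcases Finset.mem_union.mp hc with h | h
    · exact hsub1 (Finset.mem_of_mem_erase h)
    · rw [Finset.mem_singleton.mp h]; exact hsub2 ha
  have hnS : ∀ r ∈ Set.Ioc (0:ℝ) x, nT xd S r = 2 := by
    intro r hr
    have : S.filter (fun c => r ≤ xd c) = S := by
      apply Finset.filter_true_of_mem
      intro c hc; rw [hxd c (hSsub hc)]; exact hr.2
    rw [nT, this, hcardS]
  have hnT2 : ∀ r ∈ Set.Ioc (0:ℝ) x, nT xd T2 r = 1 := by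
    intro r hr
    have : T2.filter (fun c => r ≤ xd c) = T2 := by
      apply Finset.filter_true_of_mem
      intro c hc; rw [hxd c (hsub2 hc)]; exact hr.2
    rw [nT, this, hc2']
  rw [hxa, taxiCost, taxiCost, if_pos (le_of_eq hcardS), if_pos (le_of_eq hc2'),
      phi_const xd S x 2 hnS, phi_const xd T2 x 1 hnT2]
  have hx0 : (0:ℝ≥0∞) < ENNReal.ofReal x := ENNReal.ofReal_pos.mpr hx
  have hxt : ENNReal.ofReal x ≠ ⊤ := ENNReal.ofReal_ne_top
  calc ((2:ℕ) : ℝ≥0∞)⁻¹ * ENNReal.ofReal x < 1 * ENNReal.ofReal x := by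
        apply ENNReal.mul_lt_mul_iff_left hx0.ne' hxt |>.mpr
        norm_num
    _ = ((1:ℕ) : ℝ≥0∞)⁻¹ * ENNReal.ofReal x := by norm_num
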